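/- Let λ > 0, A > 1, and (θ_n) a real sequence. With α_0 = A and α_{n+1} = λ^{-1/(n+1)}·(λα_n^{n+1} + ⟨θ_{n+1} − λα_n^{n+1}⟩)^{1/(n+1)}, the sequence (α_n) converges to a limit α satisfying A ≤ α ≤ A + A/(λ(A−1)), and for every m ≥ 1, the fractional part ⟨λα^m − θ_m⟩ is at most 1/(A−1). -/

import Mathlib

open Filter

theorem alpha_seq_converges_and_fract_bound
    (lam A : ℝ) (hlam : 0 < lam) (hA : 1 < A)
    (θ : ℕ → ℝ) (α : ℕ → ℝ)
    (h0 : α 0 = A)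
    (hrec : ∀ n : ℕ, α (n + 1) =
      lam ^ (-(1 / (n + 1 : ℝ))) *
        (lam * α n ^ (n + 1) +
          Int.fract (θ (n + 1) - lam * α n ^ (n + 1))) ^ (1 / (n + 1 : ℝ))) :
    ∃ a : ℝ, Tendsto α atTop (nhds a) ∧
      A ≤ a ∧ a ≤ A + A / (lam * (A - 1)) ∧
      ∀ m : ℕ, 1 ≤ m → Int.fract (lam * a ^ m - θ m) ≤ 1 / (A - 1) := by
  have hA0 : (0:ℝ) < A := by linarith
  have hA1 : (0:ℝ) < A - 1 := by linarith
  set δ : ℕ → ℝ := fun n => Int.fract (θ (n + 1) - lam * α n ^ (n + 1)) with hδdef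
  have hδ0 : ∀ n, 0 ≤ δ n := fun n => Int.fract_nonneg _
  have hδ1 : ∀ n, δ n < 1 := fun n => Int.fract_lt_one _
  -- key identity
  have hkey : ∀ n, A ≤ α n → α (n+1) ^ (n+1) = α n ^ (n+1) + δ n / lam := by
    intro n hn
    have hx : 0 < α n := lt_of_lt_of_le hA0 hn
    have hX : 0 ≤ lam * α n ^ (n+1) + δ n :=
      add_nonneg (by positivity) (hδ0 n)
    have hne : ((n:ℝ)+1) ≠ 0 := by positivity
    have e1 : ((lam * α n ^ (n + 1) + δ n) ^ (1 / (n + 1 : ℝ))) ^ (n+1)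
        = lam * α n ^ (n + 1) + δ n := by
      rw [← Real.rpow_natCast ((lam * α n ^ (n + 1) + δ n) ^ (1 / (n + 1 : ℝ))) (n+1),
        ← Real.rpow_mul hX]
      have h : (1 / (n + 1 : ℝ)) * ((n+1 : ℕ) : ℝ) = 1 := by
        push_cast; field_simp
      rw [h, Real.rpow_one]
    have e2 : (lam ^ (-(1 / (n + 1 : ℝ)))) ^ (n+1) = lam⁻¹ := by
      rw [← Real.rpow_natCast (lam ^ (-(1 / (n + 1 : ℝ)))) (n+1),
        ← Real.rpow_mul hlam.le]
      have h : (-(1 / (n + 1 : ℝ))) * ((n+1 : ℕ) : ℝ) = -1 := by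
        push_cast; field_simp
      rw [h, Real.rpow_neg_one]
    rw [hrec n, mul_pow, e1, e2]
    field_simp
  have hAle : ∀ n, A ≤ α n := by
    intro n
    induction n with
    | zero => rw [h0]
    | succ n ih =>
      have hk := hkey n ih
      have h1 : A ^ (n+1) ≤ α (n+1) ^ (n+1) := by
        calc A^(n+1) ≤ α n ^ (n+1) := pow_le_pow_left₀ hA0.le ih _
          _ ≤ α (n+1) ^ (n+1) := by
              rw [hk]; exact le_add_of_nonneg_right (div_nonneg (hδ0 n) hlam.le)
      have hXX : (0:ℝ) ≤ lam * α n ^ (n+1) + δ n :=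
        add_nonneg (mul_nonneg hlam.le (pow_nonneg (hA0.le.trans ih) _)) (hδ0 n)
      have hnn : 0 ≤ α (n+1) := by
        rw [hrec n]
        exact mul_nonneg (Real.rpow_nonneg hlam.le _) (Real.rpow_nonneg hXX _)
      exact le_of_pow_le_pow_left₀ (Nat.succ_ne_zero n) hnn h1
  have hpos : ∀ n, 0 < α n := fun n => hA0.trans_le (hAle n)
  have hmono : ∀ n, α n ≤ α (n+1) := by
    intro n
    have hk := hkey n (hAle n)
    have h1 : α n ^ (n+1) ≤ α (n+1) ^ (n+1) := by
      rw [hk]; exact le_add_of_nonneg_right (div_nonneg (hδ0 n) hlam.le)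
    exact le_of_pow_le_pow_left₀ (Nat.succ_ne_zero n) (hpos (n+1)).le h1
  -- one-step bound
  have hstep : ∀ m n : ℕ, m ≤ n + 1 →
      α (n+1) ^ m ≤ α n ^ m + 1/lam * (1/A)^(n+1-m) := by
    intro m n hmn
    have hk := hkey n (hAle n)
    have hsum : m + (n+1-m) = n+1 := by omega
    set B := α n ^ (n+1-m) with hB
    have hBpos : 0 < B := pow_pos (hpos n) _
    have hAB : A ^ (n+1-m) ≤ B := pow_le_pow_left₀ hA0.le (hAle n) _
    have h1 : α (n+1) ^ m * B ≤ α n ^ m * B + δ n / lam := by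
      have hle : B ≤ α (n+1) ^ (n+1-m) :=
        pow_le_pow_left₀ (hpos n).le (hmono n) _
      calc α (n+1) ^ m * B ≤ α (n+1) ^ m * α (n+1) ^ (n+1-m) :=
            mul_le_mul_of_nonneg_left hle (pow_nonneg (hpos (n+1)).le _)
        _ = α (n+1) ^ (n+1) := by rw [← pow_add, hsum]
        _ = α n ^ (n+1) + δ n / lam := hk
        _ = α n ^ m * B + δ n / lam := by rw [hB, ← pow_add, hsum]
    have h2 : δ n / lam ≤ 1/lam * (1/A)^(n+1-m) * B := by
      have e : (1:ℝ)/lam = 1/lam * (1/A)^(n+1-m) * A^(n+1-m) := by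
        rw [mul_assoc, ← mul_pow]
        field_simp
        rw [one_pow]
      calc δ n / lam ≤ 1/lam := by gcongr; exact (hδ1 n).le
        _ = 1/lam * (1/A)^(n+1-m) * A^(n+1-m) := e
        _ ≤ 1/lam * (1/A)^(n+1-m) * B := by gcongr <;> positivity
    have h3 : α (n+1) ^ m * B ≤ (α n ^ m + 1/lam * (1/A)^(n+1-m)) * B := by
      rw [add_mul]; linarith
    exact le_of_mul_le_mul_right h3 hBpos
  -- geometric sum bound
  have hgeom : ∀ m N : ℕ, m ≤ N →
      α N ^ m ≤ α m ^ m + 1/lam * (1/(A-1)) * (1 - (1/A)^(N-m)) := by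
    intro m N hmN
    induction N, hmN using Nat.le_induction with
    | base => simp
    | succ N hmN ih =>
      have hs := hstep m N (by omega)
      have hsub : N + 1 - m = (N - m) + 1 := by omega
      set p := (1/A : ℝ)^(N-m) with hp
      have hkey2 : (1/A:ℝ)^(N+1-m) = p * (1/A) := by rw [hsub, pow_succ]
      have hid : 1/lam * (1/(A-1)) * (1 - p * (1/A))
          = 1/lam * (1/(A-1)) * (1 - p) + 1/lam * (p * (1/A)) := by
        field_simp
        ring
      rw [hkey2] at hs ⊢
      rw [hid]
      linarith
  have hbound : ∀ m N : ℕ, m ≤ N → α N ^ m ≤ α m ^ m + 1/lam * (1/(A-1)) := by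
    intro m N h
    have hg := hgeom m N h
    have h1 : (0:ℝ) ≤ (1/A)^(N-m) := by positivity
    have h2 : (0:ℝ) ≤ 1/lam * (1/(A-1)) := by positivity
    nlinarith
  have hq : 1/lam + 1/lam * (1/(A-1)) = A/(lam*(A-1)) := by
    field_simp
    ring
  have hub : ∀ N, α N ≤ A + A/(lam*(A-1)) := by
    intro N
    rcases Nat.eq_zero_or_pos N with h | h
    · subst h; rw [h0]
      have : 0 < A/(lam*(A-1)) := by positivity
      linarith
    · have h1 : α N ^ 1 ≤ α 1 ^ 1 + 1/lam * (1/(A-1)) := hbound 1 N h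
      have h2 : α 1 ^ 1 ≤ α 0 ^ 1 + 1/lam * (1/A)^(0+1-1) := hstep 1 0 le_rfl
      simp only [pow_one] at h1 h2
      norm_num at h2
      rw [h0] at h2
      have hinv : lam⁻¹ = 1/lam := (one_div lam).symm
      linarith
  have hMono : Monotone α := monotone_nat_of_le_succ hmono
  have hbdd : BddAbove (Set.range α) :=
    ⟨A + A/(lam*(A-1)), by rintro x ⟨n, rfl⟩; exact hub n⟩
  set a := ⨆ n, α n with ha
  have hta : Tendsto α atTop (nhds a) := tendsto_atTop_ciSup hMono hbdd
  refine ⟨a, hta, h0 ▸ le_ciSup hbdd 0, ciSup_le hub, ?_⟩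
  intro m hm
  obtain ⟨k, rfl⟩ : ∃ k, m = k + 1 := ⟨m - 1, by omega⟩
  set m := k + 1 with hmdef
  have ham : α m ≤ a := le_ciSup hbdd m
  have hpm : Tendsto (fun N => α N ^ m) atTop (nhds (a ^ m)) := hta.pow m
  have hup : a ^ m ≤ α m ^ m + 1/lam * (1/(A-1)) :=
    le_of_tendsto hpm (eventually_atTop.2 ⟨m, fun N hN => hbound m N hN⟩)
  have hlo : α m ^ m ≤ a ^ m := pow_le_pow_left₀ (hpos m).le ham m
  set t := lam * (a ^ m - α m ^ m) with htdef
  have ht0 : 0 ≤ t := mul_nonneg hlam.le (by linarith)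
  have ht1 : t ≤ 1/(A-1) := by
    have h' : a ^ m - α m ^ m ≤ 1/lam * (1/(A-1)) := by linarith
    have h2' : t ≤ lam * (1/lam * (1/(A-1))) := mul_le_mul_of_nonneg_left h' hlam.le
    have h3' : lam * (1/lam * (1/(A-1))) = 1/(A-1) := by field_simp
    linarith
  have hint : lam * α m ^ m - θ m
      = ((-⌊θ (k + 1) - lam * α k ^ (k + 1)⌋ : ℤ) : ℝ) := by
    have hk := hkey k (hAle k)
    have hfr : δ k = (θ (k + 1) - lam * α k ^ (k + 1)) - ⌊θ (k + 1) - lam * α k ^ (k + 1)⌋ := by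
      simp only [hδdef]
      exact (Int.self_sub_floor _).symm
    rw [hmdef, hk]
    push_cast
    field_simp
    linarith [hfr]
  have hfr2 : Int.fract (lam * a ^ m - θ m) = Int.fract t := by
    have heq : lam * a ^ m - θ m
        = ((-⌊θ (k + 1) - lam * α k ^ (k + 1)⌋ : ℤ) : ℝ) + t := by
      rw [htdef]; rw [← hint]; ring
    rw [heq, Int.fract_intCast_add]
  rw [hfr2]
  by_cases hc : (1:ℝ)/(A-1) < 1
  · rw [Int.fract_eq_self.2 ⟨ht0, lt_of_le_of_lt ht1 hc⟩]
    exact ht1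
  · have := Int.fract_lt_one t
    push_neg at hc
    linarith
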